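/- Let Γ1 and Γ2 be triangulations of the n-gon related by a Whitehead move: there are vertices p<q<r<s such that a1={p,q}, a2={q,r}, a3={r,s}, a4={p,s} are edges of Γ1, the diagonal d={p,r} belongs to D1, d′={q,s}, and D2=(D1∖{d})∪{d′} is again a set of n−3 pairwise non-crossing diagonals. Let u be a function from the edges of Γ1 to ℝ such that: (i) 2·u(e_i) is an integer for i = 1,…,n−1; (ii) u(e_1)+⋯+u(e_n) is an integer; and (iii) for every diagonal δ ∈ D1, the number (Σ_{i ∈ I_δ} u(e_i)) − u(δ) is an integer. Set u(d′) = u(d) − min(u(a1)+u(a2), u(a3)+u(a4)) + min(u(a1)+u(a4), u(a2)+u(a3)). Then (Σ_{i ∈ I_{d′}} u(e_i)) − u(d′) is an integer. -/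

import Mathlib

open Classical

/-- `IsSide n p q` : the pair `{p, q}` (with `p < q`) is a side of the convex `n`-gon with
vertices labeled `0, 1, …, n-1`; the sides are `e_i = {i-1, i}` for `i = 1, …, n-1`
together with `e_n = {0, n-1}`. -/
def IsSide (n p q : ℕ) : Prop :=
  p < q ∧ q < n ∧ (q = p + 1 ∨ (p = 0 ∧ q = n - 1))

/-- `IsDiag n p q` : the pair `{p, q}` (with `p < q`) is a diagonal of the `n`-gon, i.e.
a pair of distinct vertices which is not a side. -/
def IsDiag (n p q : ℕ) : Prop :=
  p < q ∧ q < n ∧ ¬(q = p + 1 ∨ (p = 0 ∧ q = n - 1))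

/-- Two diagonals `{p, q}` (`p < q`) and `{p', q'}` (`p' < q'`) cross if
`p < p' < q < q'` or `p' < p < q' < q`. -/
def Crosses (d d' : ℕ × ℕ) : Prop :=
  (d.1 < d'.1 ∧ d'.1 < d.2 ∧ d.2 < d'.2) ∨ (d'.1 < d.1 ∧ d.1 < d'.2 ∧ d'.2 < d.2)

/-- A triangulation of the `n`-gon: a set of `n - 3` pairwise non-crossing diagonals. -/
def IsTriangulation (n : ℕ) (D : Finset (ℕ × ℕ)) : Prop :=
  D.card = n - 3 ∧ (∀ d ∈ D, IsDiag n d.1 d.2) ∧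
    ∀ d ∈ D, ∀ d' ∈ D, d ≠ d' → ¬Crosses d d'

/-- The edges of the triangulation with diagonal set `D`: the sides of the `n`-gon
together with the diagonals in `D`. -/
def IsEdge (n : ℕ) (D : Finset (ℕ × ℕ)) (p q : ℕ) : Prop :=
  IsSide n p q ∨ (p, q) ∈ D

/-- A triangle of the triangulation: vertices `p < q < r` such that all three pairs are
edges. -/
def IsTriangleOf (n : ℕ) (D : Finset (ℕ × ℕ)) (p q r : ℕ) : Prop :=
  p < q ∧ q < r ∧ IsEdge n D p q ∧ IsEdge n D q r ∧ IsEdge n D p r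

/-- A function `u` on edges (given on ordered pairs) satisfies the triangle inequalities of
the triangulation if for every triangle with edges `a, b, c` one has
`|u a - u b| ≤ u c ≤ u a + u b`. -/
def SatisfiesTriangleIneqs (n : ℕ) (D : Finset (ℕ × ℕ)) (u : ℕ × ℕ → ℝ) : Prop :=
  ∀ p q r : ℕ, IsTriangleOf n D p q r →
    |u (p, q) - u (q, r)| ≤ u (p, r) ∧ u (p, r) ≤ u (p, q) + u (q, r)

/-- The piecewise-linear transformation associated to a Whitehead move is defined over `ℤ`
with respect to the lattice coordinates: if `Γ1` and `Γ2` are triangulations related by a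
Whitehead move replacing the diagonal `d = {p, r}` by `d' = {q, s}` (in the quadrilateral
with sides `a1 = {p,q}`, `a2 = {q,r}`, `a3 = {r,s}`, `a4 = {p,s}`), and `u` is a function
on the edges of `Γ1` such that each `2 * u(e_i)` (`i = 1, …, n-1`) is an integer, the
total perimeter `u(e_1) + ⋯ + u(e_n)` is an integer, and `(∑_{i ∈ I_δ} u(e_i)) - u(δ)`
is an integer for every diagonal `δ ∈ D1`, then, setting
`u(d') = u(d) - min (u(a1)+u(a2)) (u(a3)+u(a4)) + min (u(a1)+u(a4)) (u(a2)+u(a3))`,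
the quantity `(∑_{i ∈ I_{d'}} u(e_i)) - u(d')` is an integer. Here `e_i = (i-1, i)` for
`i = 1, …, n-1`, `e_n = (0, n-1)`, and `I_δ = {p+1, …, q}` for `δ = (p, q)`. -/
lemma sum_int_of_forall {s : Finset ℕ} {g : ℕ → ℝ}
    (h : ∀ i ∈ s, ∃ m : ℤ, g i = (m : ℝ)) :
    ∃ m : ℤ, ∑ i ∈ s, g i = (m : ℝ) := by
  classical
  induction s using Finset.induction_on with
  | empty => exact ⟨0, by simp⟩
  | insert _ _ hx ih =>
    obtain ⟨m1, hm1⟩ := h _ (Finset.mem_insert_self _ _)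
    obtain ⟨m2, hm2⟩ := ih (fun i hi => h i (Finset.mem_insert_of_mem hi))
    exact ⟨m1 + m2, by rw [Finset.sum_insert hx, hm1, hm2]; push_cast; ring⟩

theorem whitehead_move_defined_over_int (n : ℕ) (hn : 4 ≤ n)
    (D1 : Finset (ℕ × ℕ)) (hD1 : IsTriangulation n D1)
    (p q r s : ℕ) (hpq : p < q) (hqr : q < r) (hrs : r < s)
    (ha1 : IsEdge n D1 p q) (ha2 : IsEdge n D1 q r)
    (ha3 : IsEdge n D1 r s) (ha4 : IsEdge n D1 p s)
    (hd : (p, r) ∈ D1)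
    (hD2 : IsTriangulation n (D1.erase (p, r) ∪ {(q, s)}))
    (u : ℕ × ℕ → ℝ)
    (hhalf : ∀ i : ℕ, 1 ≤ i → i ≤ n - 1 → ∃ m : ℤ, 2 * u (i - 1, i) = (m : ℝ))
    (hper : ∃ m : ℤ,
      (∑ i ∈ Finset.range (n - 1), u (i, i + 1)) + u (0, n - 1) = (m : ℝ))
    (hdiag : ∀ d ∈ D1,
      ∃ m : ℤ, (∑ i ∈ Finset.Icc (d.1 + 1) d.2, u (i - 1, i)) - u d = (m : ℝ)) :
    ∃ m : ℤ,
      (∑ i ∈ Finset.Icc (q + 1) s, u (i - 1, i)) -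
        (u (p, r) - min (u (p, q) + u (q, r)) (u (r, s) + u (p, s))
          + min (u (p, q) + u (p, s)) (u (q, r) + u (r, s))) = (m : ℝ) := by

  obtain ⟨hcard, hdiagD, hnc⟩ := hD1
  have hedge : ∀ x y : ℕ, IsEdge n D1 x y → x < y ∧ y < n := by
    rintro x y (⟨h1, h2, _⟩ | h)
    · exact ⟨h1, h2⟩
    · have := hdiagD _ h; exact ⟨this.1, this.2.1⟩
  have hsn : s < n := (hedge _ _ ha3).2
  have twoS : ∀ a b : ℕ, b < n →
      ∃ m : ℤ, 2 * ∑ i ∈ Finset.Ioc a b, u (i - 1, i) = (m : ℝ) := by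
    intro a b hb
    have h : ∀ i ∈ Finset.Ioc a b, ∃ m : ℤ, 2 * u (i - 1, i) = (m : ℝ) := by
      intro i hi
      rcases Finset.mem_Ioc.mp hi with ⟨h1, h2⟩
      exact hhalf i (by omega) (by omega)
    obtain ⟨m, hm⟩ := sum_int_of_forall h
    exact ⟨m, by rw [Finset.mul_sum]; exact hm⟩
  have hsum_reindex : ∑ i ∈ Finset.range (n - 1), u (i, i + 1)
      = ∑ i ∈ Finset.Ioc 0 (n - 1), u (i - 1, i) := by
    have h1 : Finset.Ioc 0 (n - 1) = Finset.Ico 1 n := by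
      ext x; simp only [Finset.mem_Ioc, Finset.mem_Ico]; omega
    rw [h1, Finset.sum_Ico_eq_sum_range]
    apply Finset.sum_congr rfl
    intro i _
    have h2 : 1 + i - 1 = i := by omega
    rw [h2, Nat.add_comm]
  have vInt : ∀ x y : ℕ, IsEdge n D1 x y →
      ∃ m : ℤ, (∑ i ∈ Finset.Ioc x y, u (i - 1, i)) - u (x, y) = (m : ℝ) := by
    rintro x y (⟨hxy, hyn, hside⟩ | hmem)
    · rcases hside with h | ⟨hx0, hy⟩
      · subst h
        refine ⟨0, ?_⟩
        have h1 : Finset.Ioc x (x + 1) = {x + 1} := by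
          ext z; simp only [Finset.mem_Ioc, Finset.mem_singleton]; omega
        rw [h1, Finset.sum_singleton]
        simp
      · subst hx0; subst hy
        obtain ⟨m, hm⟩ := hper
        obtain ⟨m2, hm2⟩ := twoS 0 (n - 1) (by omega)
        rw [hsum_reindex] at hm
        exact ⟨m2 - m, by push_cast; linarith⟩
    · obtain ⟨m, hm⟩ := hdiag _ hmem
      exact ⟨m, by rw [← Finset.Icc_add_one_left_eq_Ioc]; exact hm⟩
  obtain ⟨m1, hm1⟩ := vInt p q ha1
  obtain ⟨m2, hm2⟩ := vInt q r ha2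
  obtain ⟨m3, hm3⟩ := vInt r s ha3
  obtain ⟨m4, hm4⟩ := vInt p s ha4
  obtain ⟨md, hmd⟩ := vInt p r (Or.inr hd)
  obtain ⟨MA, hMA⟩ := twoS p q (by omega)
  obtain ⟨MC, hMC⟩ := twoS r s hsn
  have hAB : ∑ i ∈ Finset.Ioc p r, u (i - 1, i)
      = (∑ i ∈ Finset.Ioc p q, u (i - 1, i)) + ∑ i ∈ Finset.Ioc q r, u (i - 1, i) :=
    (Finset.sum_Ioc_consecutive _ hpq.le hqr.le).symm
  have hBC : ∑ i ∈ Finset.Ioc q s, u (i - 1, i)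
      = (∑ i ∈ Finset.Ioc q r, u (i - 1, i)) + ∑ i ∈ Finset.Ioc r s, u (i - 1, i) :=
    (Finset.sum_Ioc_consecutive _ hqr.le hrs.le).symm
  have hABC : ∑ i ∈ Finset.Ioc p s, u (i - 1, i)
      = (∑ i ∈ Finset.Ioc p q, u (i - 1, i)) + ∑ i ∈ Finset.Ioc q s, u (i - 1, i) :=
    (Finset.sum_Ioc_consecutive _ hpq.le (le_trans hqr.le hrs.le)).symm
  rw [Finset.Icc_add_one_left_eq_Ioc]
  rcases le_total (u (p, q) + u (q, r)) (u (r, s) + u (p, s)) with h1 | h1 <;>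
    rcases le_total (u (p, q) + u (p, s)) (u (q, r) + u (r, s)) with h2 | h2
  · rw [min_eq_left h1, min_eq_left h2]
    exact ⟨md - m2 + m4 - MA, by push_cast; linarith⟩
  · rw [min_eq_left h1, min_eq_right h2]
    exact ⟨md - m1 + m3, by push_cast; linarith⟩
  · rw [min_eq_right h1, min_eq_left h2]
    exact ⟨md + m1 - m3 + MC - MA, by push_cast; linarith⟩
  · rw [min_eq_right h1, min_eq_right h2]
    exact ⟨md + m2 - m4 + MC, by push_cast; linarith⟩
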